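/- arXiv:1808.08486 — 2 statements merged into one kernel-verified Lean document; each statement's English description precedes it below -/
import Mathlib

section
/- If J is a zero-sum sequence of length 3n in (ℤ/nℤ)², then J contains a zero-sum subsequence of length n. -/
set_option linter.unusedSectionVars false
open Finset MvPolynomial

variable {ι : Type*}

section prime
variable {p : ℕ} [Fact p.Prime]

private noncomputable def g₁ (s : Finset ι) : MvPolynomial s (ZMod p) :=
  ∑ i : s, X i ^ (p - 1)

private noncomputable def g₂ (s : Finset ι) (a : ι → ZMod p × ZMod p) :
    MvPolynomial s (ZMod p) := ∑ i : s, (a i).1 • X i ^ (p - 1)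

private noncomputable def g₃ (s : Finset ι) (a : ι → ZMod p × ZMod p) :
    MvPolynomial s (ZMod p) := ∑ i : s, (a i).2 • X i ^ (p - 1)

private lemma totalDegree_g₁ {s : Finset ι} : (g₁ (p := p) s).totalDegree ≤ p - 1 := by
  apply totalDegree_finsetSum_le; rintro i _; exact (totalDegree_X_pow ..).le

private lemma totalDegree_g₂ {s : Finset ι} {a : ι → ZMod p × ZMod p} :
    (g₂ s a).totalDegree ≤ p - 1 := by
  apply totalDegree_finsetSum_le; rintro i _
  exact (totalDegree_smul_le ..).trans (totalDegree_X_pow ..).le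

private lemma totalDegree_g₃ {s : Finset ι} {a : ι → ZMod p × ZMod p} :
    (g₃ s a).totalDegree ≤ p - 1 := by
  apply totalDegree_finsetSum_le; rintro i _
  exact (totalDegree_smul_le ..).trans (totalDegree_X_pow ..).le

/-- Core existence lemma: from more than `3p-3` but fewer than `3p` elements, one can find a
zero-sum subset of size `p` or `2p`. -/
theorem coreE (s : Finset ι) (a : ι → ZMod p × ZMod p) (h1 : 3 * (p - 1) < s.card)
    (h2 : s.card < 3 * p) :
    ∃ t ⊆ s, (t.card = p ∨ t.card = 2 * p) ∧ ∑ i ∈ t, a i = 0 := by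
  haveI : NeZero p := inferInstance
  classical
  set N := Fintype.card {x : s → ZMod p //
    eval x (g₁ s) = 0 ∧ eval x (g₂ s a) = 0 ∧ eval x (g₃ s a) = 0} with hN
  have hp1 : 1 < p := (Fact.out : p.Prime).one_lt
  let zero_sol : {x : s → ZMod p //
      eval x (g₁ s) = 0 ∧ eval x (g₂ s a) = 0 ∧ eval x (g₃ s a) = 0} :=
    ⟨0, by simp [g₁, g₂, g₃, map_sum, (Fact.out : p.Prime).one_lt, tsub_eq_zero_iff_le]⟩
  have hN₀ : 0 < N := @Fintype.card_pos _ _ ⟨zero_sol⟩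
  have hpN : p ∣ N := by
    have hdeg : (∑ i ∈ (Finset.univ : Finset (Fin 3)),
        (![g₁ s, g₂ s a, g₃ s a] i).totalDegree) < Fintype.card s := by
      rw [Fin.sum_univ_three]
      simp only [Matrix.cons_val_zero, Matrix.cons_val_one, Matrix.head_cons]
      calc (g₁ s).totalDegree + (g₂ s a).totalDegree + (g₃ s a).totalDegree
          ≤ (p-1) + (p-1) + (p-1) := by gcongr <;>
            [exact totalDegree_g₁; exact totalDegree_g₂; exact totalDegree_g₃]
        _ < Fintype.card s := by
            rw [Fintype.card_coe]; omega
    have h := char_dvd_card_solutions_of_sum_lt (K := ZMod p) (σ := s) (ι := Fin 3) p hdeg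
    have e : Fintype.card { x : s → ZMod p // ∀ i ∈ (Finset.univ : Finset (Fin 3)),
        eval x (![g₁ s, g₂ s a, g₃ s a] i) = 0 } = N := by
      apply Fintype.card_congr
      apply Equiv.subtypeEquivRight
      intro x
      simp [Fin.forall_fin_succ, and_assoc]
    have h' : p ∣ Fintype.card { x : s → ZMod p // ∀ i ∈ (Finset.univ : Finset (Fin 3)),
        eval x (![g₁ s, g₂ s a, g₃ s a] i) = 0 } := by convert h using 2
    exact e ▸ h'
  obtain ⟨x, hx⟩ := Fintype.exists_ne_of_one_lt_card (hp1.trans_le <| Nat.le_of_dvd hN₀ hpN)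
    zero_sol
  refine ⟨({i | x.1 i ≠ 0} : Finset _).map ⟨(↑), Subtype.val_injective⟩, ?_, ?_, ?_⟩
  · simp +contextual [Finset.subset_iff]
  · rw [Finset.card_map]
    have hdvd : p ∣ #({i | x.1 i ≠ 0} : Finset s) := by
      rw [← CharP.cast_eq_zero_iff (ZMod p), ← Finset.sum_boole]
      simpa only [g₁, map_sum, ZMod.pow_card_sub_one, map_pow, eval_X] using x.2.1
    have hpos : 0 < #({i | x.1 i ≠ 0} : Finset s) := by
      rw [Finset.card_pos]
      rw [← Subtype.coe_ne_coe, Function.ne_iff] at hx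
      obtain ⟨i, hi⟩ := hx
      exact ⟨i, by simpa [zero_sol] using hi⟩
    have hlt : #({i | x.1 i ≠ 0} : Finset s) < 3 * p := by
      calc #({i | x.1 i ≠ 0} : Finset s) ≤ Fintype.card s := Finset.card_le_univ _
        _ = #s := Fintype.card_coe s
        _ < 3 * p := h2
    obtain ⟨j, hj⟩ := hdvd
    have hj3 : j < 3 := Nat.lt_of_mul_lt_mul_left (a := p)
      (by rw [← hj]; rw [mul_comm 3 p] at hlt; exact hlt)
    have hj0 : 0 < j := by
      rcases Nat.eq_zero_or_pos j with h | h
      · subst h; rw [mul_zero] at hj; rw [hj] at hpos; exact absurd hpos (lt_irrefl 0)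
      · exact h
    have hj12 : j = 1 ∨ j = 2 := by omega
    rcases hj12 with rfl | rfl
    · left; rw [hj, mul_one]
    · right; rw [hj, mul_comm]
  · rw [Finset.sum_map]
    have h2 := x.2.2.1
    have h3 := x.2.2.2
    have e1 : ∑ i ∈ ({i | x.1 i ≠ 0} : Finset s), (a i : ZMod p × ZMod p).1 = 0 := by
      simpa [g₂, ZMod.pow_card_sub_one, Finset.sum_filter] using h2
    have e2 : ∑ i ∈ ({i | x.1 i ≠ 0} : Finset s), (a i : ZMod p × ZMod p).2 = 0 := by
      simpa [g₃, ZMod.pow_card_sub_one, Finset.sum_filter] using h3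
    refine Prod.ext ?_ ?_
    · rw [Prod.fst_sum]; simpa using e1
    · rw [Prod.snd_sum]; simpa using e2

end prime

section counting
variable {p : ℕ} [Fact p.Prime] {σ : Type*} [Fintype σ] [DecidableEq σ]

private noncomputable def q₁ : MvPolynomial σ (ZMod p) := ∑ i : σ, X i ^ (p - 1)

private noncomputable def q₂ (a : σ → ZMod p × ZMod p) : MvPolynomial σ (ZMod p) :=
  ∑ i : σ, (a i).1 • X i ^ (p - 1)

private noncomputable def q₃ (a : σ → ZMod p × ZMod p) : MvPolynomial σ (ZMod p) :=
  ∑ i : σ, (a i).2 • X i ^ (p - 1)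

/-- support of a vector -/
private def supp (x : σ → ZMod p) : Finset σ := Finset.univ.filter (fun i => x i ≠ 0)

private lemma fiber_card (T : Finset σ) :
    Fintype.card {x : σ → ZMod p // supp x = T} = (p - 1) ^ T.card := by
  classical
  rw [Fintype.card_subtype]
  have he : Finset.univ.filter (fun x : σ → ZMod p => supp x = T)
      = Fintype.piFinset (fun i => if i ∈ T then ({0}ᶜ : Finset (ZMod p)) else {0}) := by
    ext x
    simp only [Finset.mem_filter, Finset.mem_univ, true_and, Fintype.mem_piFinset]
    constructor
    · intro h i
      split_ifs with hiT
      · simp only [Finset.mem_compl, Finset.mem_singleton]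
        have : i ∈ supp x := h ▸ hiT
        simpa [supp] using this
      · have : i ∉ supp x := fun hc => hiT (h ▸ hc)
        simpa [supp] using this
    · intro h
      ext i
      have := h i
      constructor
      · intro hi
        by_contra hiT
        rw [if_neg hiT] at this
        simp only [Finset.mem_singleton] at this
        simp [supp, this] at hi
      · intro hi
        rw [if_pos hi] at this
        simp only [Finset.mem_compl, Finset.mem_singleton] at this
        simp [supp, this]
  rw [he, Fintype.card_piFinset]
  rw [← Finset.prod_filter_mul_prod_filter_not Finset.univ (· ∈ T)]
  have h1 : Finset.univ.filter (· ∈ T) = T := by ext i; simp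
  rw [h1]
  have h2 : ∀ i ∈ T, (if i ∈ T then ({0}ᶜ : Finset (ZMod p)) else {0}).card = p - 1 := by
    intro i hi
    rw [if_pos hi, Finset.card_compl, Finset.card_singleton, ZMod.card]
  have h3 : ∀ i ∈ Finset.univ.filter (¬ · ∈ T),
      (if i ∈ T then ({0}ᶜ : Finset (ZMod p)) else {0}).card = 1 := by
    intro i hi
    simp only [Finset.mem_filter] at hi
    rw [if_neg hi.2, Finset.card_singleton]
  rw [Finset.prod_congr rfl h2, Finset.prod_congr rfl h3]
  simp

private lemma indic (c : ZMod p) : (1 : ZMod p) - c ^ (p - 1) = if c = 0 then 1 else 0 := by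
  split_ifs with h
  · subst h
    rw [zero_pow (by have := (Fact.out : p.Prime).one_lt; omega), sub_zero]
  · rw [ZMod.pow_card_sub_one_eq_one h, sub_self]

omit [DecidableEq σ] in
private lemma eval_q₁ (x : σ → ZMod p) : eval x (q₁ : MvPolynomial σ (ZMod p))
    = ((supp x).card : ZMod p) := by
  simp only [q₁, map_sum, map_pow, eval_X, ZMod.pow_card_sub_one, supp]
  rw [Finset.sum_boole]

private lemma eval_q₂ (a : σ → ZMod p × ZMod p) (x : σ → ZMod p) :
    eval x (q₂ a) = ∑ i ∈ supp x, (a i).1 := by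
  simp only [q₂, map_sum, smul_eval, map_pow, eval_X, ZMod.pow_card_sub_one, supp, smul_eq_mul,
    mul_ite, mul_one, mul_zero]
  rw [Finset.sum_filter]

private lemma eval_q₃ (a : σ → ZMod p × ZMod p) (x : σ → ZMod p) :
    eval x (q₃ a) = ∑ i ∈ supp x, (a i).2 := by
  simp only [q₃, map_sum, smul_eval, map_pow, eval_X, ZMod.pow_card_sub_one, supp, smul_eq_mul,
    mul_ite, mul_one, mul_zero]
  rw [Finset.sum_filter]

private noncomputable def Wp : MvPolynomial σ (ZMod p) :=
  ∑ U ∈ Finset.powersetCard p (Finset.univ : Finset σ), ∏ i ∈ U, X i ^ (p - 1)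

private lemma eval_Wp (x : σ → ZMod p) :
    eval x (Wp : MvPolynomial σ (ZMod p)) = ((supp x).card.choose p : ZMod p) := by
  simp only [Wp, map_sum, map_prod, map_pow, eval_X, ZMod.pow_card_sub_one]
  have h1 : ∀ U ∈ Finset.powersetCard p (Finset.univ : Finset σ),
      (∏ i ∈ U, if x i ≠ 0 then (1 : ZMod p) else 0) = if U ⊆ supp x then 1 else 0 := by
    intro U _
    rw [Finset.prod_boole]
    congr 1
    simp only [supp, eq_iff_iff]
    constructor
    · intro h i hi; simp only [Finset.mem_filter]; exact ⟨Finset.mem_univ i, h i hi⟩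
    · intro h i hi; exact (Finset.mem_filter.mp (h hi)).2
  rw [Finset.sum_congr rfl h1, Finset.sum_boole]
  congr 1
  rw [← Finset.card_powersetCard]
  congr 1
  ext U
  simp only [Finset.mem_filter, Finset.mem_powersetCard]
  constructor
  · rintro ⟨⟨-, hc⟩, hsub⟩; exact ⟨hsub, hc⟩
  · rintro ⟨hsub, hc⟩; exact ⟨⟨Finset.subset_univ U, hc⟩, hsub⟩

private lemma totalDegree_Wp :
    (Wp : MvPolynomial σ (ZMod p)).totalDegree ≤ p * (p - 1) := by
  apply totalDegree_finsetSum_le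
  intro U hU
  calc (∏ i ∈ U, (X i : MvPolynomial σ (ZMod p)) ^ (p - 1)).totalDegree
      ≤ ∑ i ∈ U, ((X i : MvPolynomial σ (ZMod p)) ^ (p - 1)).totalDegree :=
        totalDegree_finset_prod U _
    _ ≤ ∑ _i ∈ U, (p - 1) := Finset.sum_le_sum fun i _ => (totalDegree_X_pow ..).le
    _ = U.card * (p - 1) := by rw [Finset.sum_const, smul_eq_mul]
    _ = p * (p - 1) := by rw [(Finset.mem_powersetCard.mp hU).2]

private lemma totalDegree_one_sub_pow (f : MvPolynomial σ (ZMod p)) (hf : f.totalDegree ≤ p - 1) :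
    ((1 : MvPolynomial σ (ZMod p)) - f ^ (p - 1)).totalDegree ≤ (p - 1) * (p - 1) := by
  refine (totalDegree_sub _ _).trans ?_
  simp only [totalDegree_one, sup_le_iff]
  constructor
  · exact Nat.zero_le _
  · exact (totalDegree_pow _ _).trans (by exact Nat.mul_le_mul_left _ hf)

private lemma totalDegree_q₁ : (q₁ : MvPolynomial σ (ZMod p)).totalDegree ≤ p - 1 := by
  apply totalDegree_finsetSum_le; rintro i _; exact (totalDegree_X_pow ..).le

private lemma totalDegree_q₂ {a : σ → ZMod p × ZMod p} : (q₂ a).totalDegree ≤ p - 1 := by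
  apply totalDegree_finsetSum_le; rintro i _
  exact (totalDegree_smul_le ..).trans (totalDegree_X_pow ..).le

private lemma totalDegree_q₃ {a : σ → ZMod p × ZMod p} : (q₃ a).totalDegree ≤ p - 1 := by
  apply totalDegree_finsetSum_le; rintro i _
  exact (totalDegree_smul_le ..).trans (totalDegree_X_pow ..).le

/-- The key counting identity, generic in a "weight" polynomial `W`. -/
private lemma core_id (a : σ → ZMod p × ZMod p) (W : MvPolynomial σ (ZMod p)) (ω : ℕ → ZMod p)
    (hWdeg : W.totalDegree + 3 * ((p - 1) * (p - 1)) < (p - 1) * Fintype.card σ)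
    (hWval : ∀ x : σ → ZMod p, eval x W = ω (supp x).card) :
    ∑ T : Finset σ, (if ((T.card : ZMod p) = 0 ∧ ∑ i ∈ T, a i = 0)
      then ((p - 1 : ℕ) ^ T.card : ZMod p) * ω T.card else 0) = 0 := by
  classical
  set F : MvPolynomial σ (ZMod p) :=
    (1 - q₁ ^ (p - 1)) * ((1 - q₂ a ^ (p - 1)) * ((1 - q₃ a ^ (p - 1)) * W)) with hF
  have hdeg : F.totalDegree < (Fintype.card (ZMod p) - 1) * Fintype.card σ := by
    rw [ZMod.card]
    have d1 : ((1 : MvPolynomial σ (ZMod p)) - q₁ ^ (p - 1)).totalDegree ≤ (p - 1) * (p - 1) :=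
      totalDegree_one_sub_pow _ totalDegree_q₁
    have d2 : ((1 : MvPolynomial σ (ZMod p)) - q₂ a ^ (p - 1)).totalDegree ≤ (p - 1) * (p - 1) :=
      totalDegree_one_sub_pow _ totalDegree_q₂
    have d3 : ((1 : MvPolynomial σ (ZMod p)) - q₃ a ^ (p - 1)).totalDegree ≤ (p - 1) * (p - 1) :=
      totalDegree_one_sub_pow _ totalDegree_q₃
    have hm1 := totalDegree_mul ((1 : MvPolynomial σ (ZMod p)) - q₃ a ^ (p - 1)) W
    have hm2 := totalDegree_mul ((1 : MvPolynomial σ (ZMod p)) - q₂ a ^ (p - 1))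
      (((1 : MvPolynomial σ (ZMod p)) - q₃ a ^ (p - 1)) * W)
    have hm3 := totalDegree_mul ((1 : MvPolynomial σ (ZMod p)) - q₁ ^ (p - 1))
      (((1 : MvPolynomial σ (ZMod p)) - q₂ a ^ (p - 1)) *
        (((1 : MvPolynomial σ (ZMod p)) - q₃ a ^ (p - 1)) * W))
    rw [hF]
    omega
  have hzero : ∑ x : σ → ZMod p, eval x F = 0 := sum_eval_eq_zero F hdeg
  have hx : ∀ x : σ → ZMod p, eval x F =
      (if (((supp x).card : ZMod p) = 0 ∧ ∑ i ∈ supp x, a i = 0) then ω (supp x).card else 0) := by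
    intro x
    rw [hF]
    simp only [map_mul, map_sub, map_one, map_pow]
    rw [indic, indic, indic, eval_q₁, eval_q₂, eval_q₃, hWval]
    have hsum : (∑ i ∈ supp x, a i = 0) ↔
        ((∑ i ∈ supp x, (a i).1 = 0) ∧ (∑ i ∈ supp x, (a i).2 = 0)) := by
      rw [Prod.ext_iff, Prod.fst_sum, Prod.snd_sum]
      simp
    split_ifs with h1 h2 h3 h4 h5 h6 h7 <;>
      simp_all <;> tauto
  rw [Finset.sum_congr rfl (fun x _ => hx x)] at hzero
  rw [← Fintype.sum_fiberwise (fun x : σ → ZMod p => supp x)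
    (fun x => (if (((supp x).card : ZMod p) = 0 ∧ ∑ i ∈ supp x, a i = 0)
      then ω (supp x).card else 0))] at hzero
  calc ∑ T : Finset σ, (if ((T.card : ZMod p) = 0 ∧ ∑ i ∈ T, a i = 0)
        then ((p - 1 : ℕ) ^ T.card : ZMod p) * ω T.card else 0)
      = ∑ T : Finset σ, ∑ y : {x : σ → ZMod p // supp x = T},
          (if (((supp y.1).card : ZMod p) = 0 ∧ ∑ i ∈ supp y.1, a i = 0)
            then ω (supp y.1).card else 0) := ?_
    _ = 0 := hzero
  apply Finset.sum_congr rfl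
  intro T _
  have hfib : ∀ y : {x : σ → ZMod p // supp x = T},
      (if (((supp y.1).card : ZMod p) = 0 ∧ ∑ i ∈ supp y.1, a i = 0)
        then ω (supp y.1).card else 0)
      = (if ((T.card : ZMod p) = 0 ∧ ∑ i ∈ T, a i = 0) then ω T.card else 0) := by
    rintro ⟨y, hy⟩; simp only [hy]
  rw [Finset.sum_congr rfl (fun y _ => hfib y)]
  rw [Finset.sum_const, Finset.card_univ, fiber_card]
  rw [nsmul_eq_mul, Nat.cast_pow]
  split_ifs with h
  · rfl
  · rw [mul_zero]

end counting

section coreC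
variable {p : ℕ} [Fact p.Prime] {σ : Type*} [Fintype σ] [DecidableEq σ]

theorem coreC (hodd : p ≠ 2) (a : σ → ZMod p × ZMod p)
    (h1 : 4 * p - 3 < Fintype.card σ) (h2 : Fintype.card σ < 4 * p)
    (hno1 : ∀ T : Finset σ, ∑ i ∈ T, a i = 0 → T.card ≠ p)
    (hno3 : ∀ T : Finset σ, ∑ i ∈ T, a i = 0 → T.card ≠ 3 * p) : False := by
  classical
  have hp1 : 1 < p := (Fact.out : p.Prime).one_lt
  set 𝒢 : Finset (Finset σ) := Finset.univ.filter
    (fun T : Finset σ => ((T.card : ZMod p) = 0 ∧ ∑ i ∈ T, a i = 0)) with h𝒢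
  have hcard : ∀ T ∈ 𝒢, T.card = 0 ∨ T.card = 2 * p := by
    intro T hT
    rw [h𝒢, Finset.mem_filter] at hT
    obtain ⟨-, hc, hs⟩ := hT
    have hdvd : p ∣ T.card := by
      rwa [ZMod.natCast_eq_zero_iff] at hc
    obtain ⟨j, hj⟩ := hdvd
    have hTle : T.card ≤ Fintype.card σ := Finset.card_le_univ T
    have hj4 : j < 4 := Nat.lt_of_mul_lt_mul_left (a := p) (by omega)
    have hj1 : j ≠ 1 := fun h => hno1 T hs (by rw [hj, h, mul_one])
    have hj3 : j ≠ 3 := fun h => hno3 T hs (by rw [hj, h, mul_comm])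
    have : j = 0 ∨ j = 2 := by omega
    rcases this with rfl | rfl
    · left; omega
    · right; rw [hj, mul_comm]
  set S2 : Finset (Finset σ) := 𝒢.filter (fun T => ¬ T.card = 0) with hS2def
  have hS0 : 𝒢.filter (fun T => T.card = 0) = {∅} := by
    ext T
    simp only [Finset.mem_filter, Finset.mem_singleton, h𝒢, Finset.mem_univ, true_and]
    constructor
    · rintro ⟨-, hc⟩; exact Finset.card_eq_zero.mp hc
    · rintro rfl
      simp
  have hS2card : ∀ T ∈ S2, T.card = 2 * p := by
    intro T hT
    rw [hS2def, Finset.mem_filter] at hT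
    rcases hcard T hT.1 with h | h
    · exact absurd h hT.2
    · exact h
  have hsign : (((p - 1 : ℕ)) : ZMod p) ^ (2 * p) = 1 := by
    have hm1 : ((p - 1 : ℕ) : ZMod p) = -1 := by
      have : ((p - 1 : ℕ) : ZMod p) = (p : ZMod p) - 1 := by
        push_cast [Nat.cast_sub hp1.le]; ring
      rw [this, ZMod.natCast_self, zero_sub]
    rw [hm1, mul_comm, pow_mul]
    simp
  have hgen : ∀ ω : ℕ → ZMod p,
      (∑ T : Finset σ, (if ((T.card : ZMod p) = 0 ∧ ∑ i ∈ T, a i = 0)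
        then ((p - 1 : ℕ) ^ T.card : ZMod p) * ω T.card else 0)) = 0 →
      ω 0 + (S2.card : ZMod p) * ω (2 * p) = 0 := by
    intro ω hI
    rw [← Finset.sum_filter] at hI
    rw [← Finset.sum_filter_add_sum_filter_not 𝒢 (fun T => T.card = 0)] at hI
    rw [hS0, Finset.sum_singleton] at hI
    have heach : ∀ T ∈ S2, ((p - 1 : ℕ) ^ T.card : ZMod p) * ω T.card = ω (2 * p) := by
      intro T hT
      rw [hS2card T hT, hsign, one_mul]
    rw [Finset.sum_congr rfl heach, Finset.sum_const, nsmul_eq_mul] at hI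
    simpa using hI
  have I1 := hgen (fun _ => 1) (core_id a 1 (fun _ => 1) ?_ ?_)
  rotate_left
  · rw [totalDegree_one, zero_add]
    have : 3 * ((p - 1) * (p - 1)) = (p - 1) * (3 * (p - 1)) := by ring
    rw [this]
    have h3 : 3 * (p - 1) < Fintype.card σ := by omega
    exact Nat.mul_lt_mul_of_pos_left h3 (by omega)
  · intro x; simp
  have I2 := hgen (fun k => (k.choose p : ZMod p))
    (core_id a Wp (fun k => (k.choose p : ZMod p)) ?_ ?_)
  rotate_left
  · have hW := totalDegree_Wp (σ := σ) (p := p)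
    have heq : p * (p - 1) + 3 * ((p - 1) * (p - 1)) = (p - 1) * (4 * p - 3) := by
      obtain ⟨q, rfl⟩ : ∃ q, p = q + 1 := ⟨p - 1, by omega⟩
      simp only [Nat.add_sub_cancel]
      rw [show 4 * (q + 1) - 3 = 4 * q + 1 by omega]
      ring
    have h4 : (p - 1) * (4 * p - 3) < (p - 1) * Fintype.card σ :=
      Nat.mul_lt_mul_of_pos_left h1 (by omega)
    omega
  · exact eval_Wp
  -- Now derive the contradiction
  simp only [Nat.choose_eq_zero_of_lt (by omega : 0 < p)] at I2
  have hch : (((2 * p).choose p : ℕ) : ZMod p) = 2 := by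
    have hm := Choose.choose_modEq_choose_mod_mul_choose_div_nat (n := 2 * p) (k := p) (p := p)
    have e1 : 2 * p % p = 0 := Nat.mul_mod_left 2 p
    have e2 : p % p = 0 := Nat.mod_self p
    have e3 : 2 * p / p = 2 := Nat.mul_div_cancel 2 (by omega : 0 < p)
    have e4 : p / p = 1 := by
      rw [Nat.div_self]; omega
    rw [e1, e2, e3, e4] at hm
    simp only [Nat.choose_zero_right, Nat.choose_one_right, one_mul] at hm
    have := (ZMod.natCast_eq_natCast_iff _ _ _).mpr hm
    rw [this]
    push_cast
    ring
  rw [hch] at I2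
  simp only [Nat.choose_eq_zero_of_lt (by omega : 0 < p), Nat.cast_zero] at I2
  have h20 : ((2 : ℕ) : ZMod p) = 0 := by
    push_cast
    linear_combination 2 * I1 - I2
  rw [ZMod.natCast_eq_zero_iff] at h20
  have : p = 2 := (Nat.prime_dvd_prime_iff_eq (Fact.out : p.Prime) Nat.prime_two).mp h20
  exact hodd this

end coreC

section multisetWrappers
variable {p : ℕ} [Fact p.Prime]

theorem coreE_m (A : Multiset (ZMod p × ZMod p)) (h1 : 3 * (p - 1) < Multiset.card A)
    (h2 : Multiset.card A < 3 * p) :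
    ∃ T ≤ A, (Multiset.card T = p ∨ Multiset.card T = 2 * p) ∧ T.sum = 0 := by
  classical
  obtain ⟨t, hts, htc, hsum⟩ := coreE (p := p) A.toEnumFinset Prod.fst
    (by rwa [Multiset.card_toEnumFinset]) (by rwa [Multiset.card_toEnumFinset])
  refine ⟨t.1.map Prod.fst, Multiset.map_fst_le_of_subset_toEnumFinset hts, ?_, ?_⟩
  · rwa [Multiset.card_map]
  · rw [← Finset.sum_eq_multiset_sum]; exact hsum

theorem coreC_m (hodd : p ≠ 2) (A : Multiset (ZMod p × ZMod p))
    (h1 : 4 * p - 3 < Multiset.card A) (h2 : Multiset.card A < 4 * p)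
    (hno1 : ¬ ∃ T ≤ A, Multiset.card T = p ∧ T.sum = 0)
    (hno3 : ¬ ∃ T ≤ A, Multiset.card T = 3 * p ∧ T.sum = 0) : False := by
  classical
  have hcardσ : Fintype.card A.toEnumFinset = Multiset.card A := by
    rw [Fintype.card_coe, Multiset.card_toEnumFinset]
  refine coreC hodd (fun x : A.toEnumFinset => (x : (ZMod p × ZMod p) × ℕ).1)
    (by rwa [hcardσ]) (by rwa [hcardσ]) ?_ ?_
  · intro T hsum hcard
    refine hno1 ⟨(T.map ⟨Subtype.val, Subtype.val_injective⟩).1.map Prod.fst, ?_, ?_, ?_⟩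
    · apply Multiset.map_fst_le_of_subset_toEnumFinset
      simp +contextual [Finset.subset_iff]
    · rw [Multiset.card_map]
      simpa using hcard
    · rw [← hsum, ← Finset.sum_eq_multiset_sum]
      rw [Finset.sum_map]
      rfl
  · intro T hsum hcard
    refine hno3 ⟨(T.map ⟨Subtype.val, Subtype.val_injective⟩).1.map Prod.fst, ?_, ?_, ?_⟩
    · apply Multiset.map_fst_le_of_subset_toEnumFinset
      simp +contextual [Finset.subset_iff]
    · rw [Multiset.card_map]
      simpa using hcard
    · rw [← hsum, ← Finset.sum_eq_multiset_sum]
      rw [Finset.sum_map]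
      rfl

end multisetWrappers

section utils
variable {α β : Type*}

lemma exists_le_card (A : Multiset α) (k : ℕ) (h : k ≤ Multiset.card A) :
    ∃ V ≤ A, Multiset.card V = k := by
  refine ⟨(A.toList.take k : List α), ?_, ?_⟩
  · have h2 : ((A.toList.take k : List α) : Multiset α) ≤ (A.toList : Multiset α) :=
      Multiset.coe_le.mpr (A.toList.take_sublist k).subperm
    rwa [Multiset.coe_toList] at h2
  · rw [Multiset.coe_card, List.length_take]
    rw [Multiset.length_toList] at *
    omega

lemma exists_le_map [DecidableEq α] [DecidableEq β] {f : α → β} :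
    ∀ {s : Multiset β} {t : Multiset α}, s ≤ t.map f → ∃ u ≤ t, u.map f = s := by
  intro s
  induction s using Multiset.induction with
  | empty => exact fun h => ⟨0, Multiset.zero_le _, rfl⟩
  | cons a s ih =>
    intro t h
    have ha : a ∈ t.map f := Multiset.mem_of_le h (Multiset.mem_cons_self a s)
    obtain ⟨b, hb, hfb⟩ := Multiset.mem_map.mp ha
    have hs : s ≤ (t.erase b).map f := by
      have h1 : s ≤ (t.map f).erase a := by
        have := Multiset.erase_le_erase a h
        rwa [Multiset.erase_cons_head] at this
      have h2 : (t.map f).erase a = (t.erase b).map f := by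
        conv_lhs => rw [← Multiset.cons_erase hb]
        rw [Multiset.map_cons, hfb, Multiset.erase_cons_head]
      rwa [h2] at h1
    obtain ⟨u, hu, hmap⟩ := ih hs
    refine ⟨b ::ₘ u, ?_, ?_⟩
    · calc b ::ₘ u ≤ b ::ₘ t.erase b := Multiset.cons_le_cons b hu
        _ = t := Multiset.cons_erase hb
    · rw [Multiset.map_cons, hfb, hmap]

lemma sub_sum {M : Type*} [AddCommGroup M] [DecidableEq M] {T S : Multiset M} (h : T ≤ S) :
    (S - T).sum = S.sum - T.sum := by
  have e := congrArg Multiset.sum (tsub_add_cancel_of_le h)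
  rw [Multiset.sum_add] at e
  have h2 : (S - T).sum + T.sum - T.sum = S.sum - T.sum := by rw [e]
  simpa using h2

end utils

section Wlemma

private lemma z2add : ∀ c : ZMod 2, c + c = 0 := by decide

private lemma z2sum : (Finset.univ : Finset (ZMod 2 × ZMod 2)).val.sum = 0 := by decide

private lemma z2card : Fintype.card (ZMod 2 × ZMod 2) = 4 := by decide

variable {p : ℕ} [Fact p.Prime]

theorem Wlem : ∀ t : ℕ, 3 ≤ t → ∀ S D : Multiset (ZMod p × ZMod p), Multiset.card D ≤ 1 →
    Multiset.card S + 2 * Multiset.card D = t * p → S.sum + D.sum = 0 →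
    ∃ s ≤ S, ∃ d ≤ D, Multiset.card s + 2 * Multiset.card d = p ∧ s.sum + d.sum = 0 := by
  have hp1 : 1 < p := (Fact.out : p.Prime).one_lt
  intro t
  induction t using Nat.strong_induction_on with
  | _ t IH =>
  intro ht S D hD hw hsum
  by_cases hp2 : p = 2
  · -- p = 2 : pigeonhole
    subst hp2
    by_cases hrep : ∃ x, 2 ≤ S.count x
    · obtain ⟨x, hx⟩ := hrep
      have hle : Multiset.replicate 2 x ≤ S := by
        rw [Multiset.le_iff_count]
        intro y
        rw [Multiset.count_replicate]
        split_ifs with h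
        · subst h; exact hx
        · omega
      refine ⟨Multiset.replicate 2 x, hle, 0, Multiset.zero_le _, ?_, ?_⟩
      · simp
      · simp only [Multiset.sum_replicate, Multiset.sum_zero, add_zero]
        rw [two_nsmul]
        exact Prod.ext (z2add x.1) (z2add x.2)
    · push_neg at hrep
      have hnd : S.Nodup := Multiset.nodup_iff_count_le_one.mpr (fun x => by have := hrep x; omega)
      have hcS : Multiset.card S ≤ 4 := by
        have h1 : S.toFinset.card = Multiset.card S := Multiset.toFinset_card_of_nodup hnd
        have h2 : S.toFinset.card ≤ Fintype.card (ZMod 2 × ZMod 2) := Finset.card_le_univ _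
        have h3 := z2card
        omega
      have hcards : Multiset.card S = 4 ∧ Multiset.card D = 1 ∧ t = 3 := by
        constructor
        · omega
        constructor <;> omega
      obtain ⟨hS4, hD1, rfl⟩ := hcards
      have hSuniv : S = (Finset.univ : Finset (ZMod 2 × ZMod 2)).val := by
        have h1 : S.toFinset = (Finset.univ : Finset (ZMod 2 × ZMod 2)) := by
          apply Finset.eq_univ_of_card
          rw [Multiset.toFinset_card_of_nodup hnd, hS4, z2card]
        calc S = S.dedup := (Multiset.dedup_eq_self.mpr hnd).symm
          _ = S.toFinset.val := rfl
          _ = _ := by rw [h1]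
      have hSsum : S.sum = 0 := by
        rw [hSuniv]
        exact z2sum
      refine ⟨0, Multiset.zero_le _, D, le_refl D, ?_, ?_⟩
      · simp [hD1]
      · rw [hSsum, zero_add] at hsum
        simpa using hsum
  · -- p odd
    have hodd : 2 < p := by
      have := (Fact.out : p.Prime).two_le
      omega
    rcases Nat.lt_or_ge t 5 with h5 | h5
    · rcases (by omega : t = 3 ∨ t = 4) with rfl | rfl
      · -- t = 3
        obtain ⟨V, hVS, hVc⟩ := exists_le_card S (3 * p - 2) (by omega)
        obtain ⟨T, hTV, hTc, hTsum⟩ := coreE_m V (by omega) (by omega)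
        have hTS : T ≤ S := hTV.trans hVS
        rcases hTc with hTc | hTc
        · exact ⟨T, hTS, 0, Multiset.zero_le _, by simp [hTc], by simp [hTsum]⟩
        · refine ⟨S - T, tsub_le_self, D, le_refl D, ?_, ?_⟩
          · rw [Multiset.card_sub hTS]
            have := Multiset.card_le_card hTS
            omega
          · rw [sub_sum hTS, hTsum, sub_zero]
            exact hsum
      · -- t = 4
        by_contra hno
        rcases (by omega : Multiset.card D = 0 ∨ Multiset.card D = 1) with hD0 | hD1
        · have hDnil : D = 0 := Multiset.card_eq_zero.mp hD0
          subst hDnil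
          simp only [Multiset.sum_zero, add_zero] at hsum
          have hcS : Multiset.card S = 4 * p := by omega
          obtain ⟨V, hVS, hVc⟩ := exists_le_card S (4 * p - 1) (by omega)
          refine coreC_m hp2 V (by omega) (by omega) ?_ ?_
          · rintro ⟨T, hTV, hTc, hTsum⟩
            exact hno ⟨T, hTV.trans hVS, 0, Multiset.zero_le _, by simp [hTc], by simp [hTsum]⟩
          · rintro ⟨T, hTV, hTc, hTsum⟩
            have hTS := hTV.trans hVS
            have hTle := Multiset.card_le_card hTS
            refine hno ⟨S - T, tsub_le_self, 0, Multiset.zero_le _, ?_, ?_⟩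
            · rw [Multiset.card_sub hTS]
              omega
            · rw [sub_sum hTS, hTsum, sub_zero]
              simpa using hsum
        · have hcS : Multiset.card S = 4 * p - 2 := by omega
          refine coreC_m hp2 S (by omega) (by omega) ?_ ?_
          · rintro ⟨T, hTS, hTc, hTsum⟩
            exact hno ⟨T, hTS, 0, Multiset.zero_le _, by simp [hTc], by simp [hTsum]⟩
          · rintro ⟨T, hTS, hTc, hTsum⟩
            have hTle := Multiset.card_le_card hTS
            refine hno ⟨S - T, tsub_le_self, D, le_refl D, ?_, ?_⟩
            · rw [Multiset.card_sub hTS]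
              omega
            · rw [sub_sum hTS, hTsum, sub_zero]
              exact hsum
    · -- t ≥ 5
      have h2 : 5 * p ≤ t * p := Nat.mul_le_mul_right p h5
      obtain ⟨V, hVS, hVc⟩ := exists_le_card S (3 * p - 2) (by omega)
      obtain ⟨T, hTV, hTc, hTsum⟩ := coreE_m V (by omega) (by omega)
      have hTS : T ≤ S := hTV.trans hVS
      rcases hTc with hTc | hTc
      · exact ⟨T, hTS, 0, Multiset.zero_le _, by simp [hTc], by simp [hTsum]⟩
      · have h1 := Multiset.card_le_card hTS
        have h3 : (t - 2) * p = t * p - 2 * p := by rw [Nat.sub_mul]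
        have hrec := IH (t - 2) (by omega) (by omega) (S - T) D hD ?_ ?_
        · obtain ⟨s, hs, d, hd, hc, hsum'⟩ := hrec
          exact ⟨s, hs.trans tsub_le_self, d, hd, hc, hsum'⟩
        · rw [Multiset.card_sub hTS]
          omega
        · rw [sub_sum hTS, hTsum, sub_zero]
          exact hsum

end Wlemma

section msumlemmas
variable {α : Type*} {M : Type*} [AddCommMonoid M]

lemma card_msum (L : Multiset (Multiset α)) :
    Multiset.card L.sum = (L.map Multiset.card).sum := by
  induction L using Multiset.induction with
  | empty => simp
  | cons B L ih => simp [ih]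

lemma sum_msum (L : Multiset (Multiset M)) :
    L.sum.sum = (L.map Multiset.sum).sum := by
  induction L using Multiset.induction with
  | empty => simp
  | cons B L ih => simp [ih]

end msumlemmas

section phisec
variable {n p m : ℕ}

private noncomputable def phi (hn : n = p * m) : ZMod p →+ ZMod n :=
  ZMod.lift p ⟨AddMonoidHom.mk' (fun x : ℤ => (m : ZMod n) * (x : ZMod n))
      (by intro a b; push_cast; ring),
    by
      have h : ((m : ZMod n) * ((p : ℕ) : ZMod n)) = 0 := by
        rw [← Nat.cast_mul, mul_comm m p, ← hn, ZMod.natCast_self]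
      simpa using h⟩

private lemma phi_intCast (hn : n = p * m) (x : ℤ) :
    phi hn ((x : ℤ) : ZMod p) = (m : ZMod n) * (x : ZMod n) := by
  rw [phi, ZMod.lift_coe]
  rfl

private lemma phi_inj (hn : n = p * m) (hp : 0 < p) (hm : 0 < m) :
    Function.Injective (phi hn) := by
  rw [injective_iff_map_eq_zero]
  intro a ha
  obtain ⟨x, rfl⟩ := ZMod.intCast_surjective a
  rw [phi_intCast hn] at ha
  have h2 : (((m : ℤ) * x : ℤ) : ZMod n) = 0 := by push_cast; exact ha
  rw [ZMod.intCast_zmod_eq_zero_iff_dvd] at h2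
  obtain ⟨k, hk⟩ := h2
  have hpx : (p : ℤ) ∣ x := by
    refine ⟨k, ?_⟩
    have hm0 : (m : ℤ) ≠ 0 := by exact_mod_cast hm.ne'
    apply mul_left_cancel₀ hm0
    rw [hk, hn]
    push_cast
    ring
  obtain ⟨k, rfl⟩ := hpx
  push_cast
  simp

private lemma phi_ker (hn : n = p * m) (x : ZMod n)
    (hdvd : m ∣ n) (hx : ZMod.castHom hdvd (ZMod m) x = 0) : ∃ c : ZMod p, phi hn c = x := by
  obtain ⟨y, rfl⟩ := ZMod.intCast_surjective x
  rw [map_intCast] at hx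
  rw [ZMod.intCast_zmod_eq_zero_iff_dvd] at hx
  obtain ⟨z, rfl⟩ := hx
  refine ⟨(z : ZMod p), ?_⟩
  rw [phi_intCast hn]
  push_cast
  ring

end phisec

section extraction
variable {n m : ℕ}

/-- Extraction of `k` blocks of size `m`, each with zero sum mod `m`. -/
lemma extract (ψ : (ZMod n × ZMod n) →+ (ZMod m × ZMod m))
    (Gm : ∀ t, 3 ≤ t → ∀ A : Multiset (ZMod m × ZMod m), Multiset.card A = t * m →
      A.sum = 0 → ∃ S ≤ A, Multiset.card S = m ∧ S.sum = 0) :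
    ∀ (k : ℕ) (R : Multiset (ZMod n × ZMod n)), Multiset.card R = (k + 2) * m →
      ψ R.sum = 0 →
      ∃ L : Multiset (Multiset (ZMod n × ZMod n)), Multiset.card L = k ∧ L.sum ≤ R ∧
        ∀ B ∈ L, Multiset.card B = m ∧ ψ B.sum = 0 := by
  intro k
  induction k with
  | zero => exact fun R _ _ => ⟨0, by simp, Multiset.zero_le _, by simp⟩
  | succ k ih =>
    intro R hc hs
    classical
    obtain ⟨S', hS'le, hS'c, hS's⟩ := Gm (k + 3) (by omega) (R.map ψ)
      (by rw [Multiset.card_map, hc]) (by rw [← map_multiset_sum, hs])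
    obtain ⟨B, hBR, hBmap⟩ := exists_le_map hS'le
    have hBc : Multiset.card B = m := by
      rw [← hS'c, ← hBmap, Multiset.card_map]
    have hBs : ψ B.sum = 0 := by
      rw [map_multiset_sum, hBmap, hS's]
    have hRBc : Multiset.card (R - B) = (k + 2) * m := by
      rw [Multiset.card_sub hBR, hc, hBc]
      have h1 : (k + 1 + 2) * m = (k + 2) * m + m := by ring
      omega
    have hRBs : ψ (R - B).sum = 0 := by
      rw [sub_sum hBR, map_sub, hs, hBs, sub_zero]
    obtain ⟨L, hLc, hLle, hLblocks⟩ := ih (R - B) hRBc hRBs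
    refine ⟨B ::ₘ L, by simp [hLc], ?_, ?_⟩
    · rw [Multiset.sum_cons]
      calc B + L.sum ≤ B + (R - B) := add_le_add_right hLle B
        _ = R := add_tsub_cancel_of_le hBR
    · rintro B' hB'
      rcases Multiset.mem_cons.mp hB' with rfl | h
      · exact ⟨hBc, hBs⟩
      · exact hLblocks B' h

end extraction

theorem goodn : ∀ n, 0 < n → ∀ t, 3 ≤ t → ∀ A : Multiset (ZMod n × ZMod n),
    Multiset.card A = t * n → A.sum = 0 → ∃ S ≤ A, Multiset.card S = n ∧ S.sum = 0 := by
  intro n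
  induction n using Nat.strong_induction_on with
  | _ n IH =>
  intro hn0 t ht A hcard hsum
  by_cases hn1 : n = 1
  · subst hn1
    obtain ⟨V, hV, hVc⟩ := exists_le_card A 1 (by omega)
    exact ⟨V, hV, hVc, Subsingleton.elim _ _⟩
  · classical
    set p := n.minFac with hp_def
    have hp : p.Prime := Nat.minFac_prime hn1
    haveI := Fact.mk hp
    set m := n / p with hm_def
    have hdvd' : p ∣ n := Nat.minFac_dvd n
    have hnpm : n = p * m := (Nat.mul_div_cancel' hdvd').symm
    have hm0 : 0 < m := Nat.div_pos (Nat.minFac_le hn0) hp.pos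
    have hmn : m < n := Nat.div_lt_self hn0 hp.one_lt
    have hdvd : m ∣ n := ⟨p, by rw [hnpm]; ring⟩
    haveI : NeZero p := ⟨hp.pos.ne'⟩
    set ψ0 : ZMod n →+ ZMod m := (ZMod.castHom hdvd (ZMod m)).toAddMonoidHom with hψ0
    set ψ : (ZMod n × ZMod n) →+ (ZMod m × ZMod m) := ψ0.prodMap ψ0 with hψdef
    set φ0 : ZMod p →+ ZMod n := phi hnpm with hφ0
    set Φ : (ZMod p × ZMod p) →+ (ZMod n × ZMod n) := φ0.prodMap φ0 with hΦdef
    have hφinj : Function.Injective φ0 := phi_inj hnpm hp.pos hm0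
    have hΦinj : Function.Injective Φ := by
      intro a b hab
      have h1 : φ0 a.1 = φ0 b.1 := congrArg Prod.fst hab
      have h2 : φ0 a.2 = φ0 b.2 := congrArg Prod.snd hab
      exact Prod.ext (hφinj h1) (hφinj h2)
    have hΦker : ∀ x : ZMod n × ZMod n, ψ x = 0 → ∃ c, Φ c = x := by
      intro x hx
      have hx1 : ZMod.castHom hdvd (ZMod m) x.1 = 0 := congrArg Prod.fst hx
      have hx2 : ZMod.castHom hdvd (ZMod m) x.2 = 0 := congrArg Prod.snd hx
      obtain ⟨c1, hc1⟩ := phi_ker hnpm x.1 hdvd hx1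
      obtain ⟨c2, hc2⟩ := phi_ker hnpm x.2 hdvd hx2
      exact ⟨(c1, c2), Prod.ext hc1 hc2⟩
    have Gm : ∀ t', 3 ≤ t' → ∀ A' : Multiset (ZMod m × ZMod m), Multiset.card A' = t' * m →
        A'.sum = 0 → ∃ S ≤ A', Multiset.card S = m ∧ S.sum = 0 :=
      fun t' ht' A' h1 h2 => IH m hmn hm0 t' ht' A' h1 h2
    have h2tp : 2 ≤ t * p := by
      have h3 : 3 * 1 ≤ t * p := Nat.mul_le_mul ht hp.pos
      omega
    have hk : Multiset.card A = ((t * p - 2) + 2) * m := by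
      rw [hcard, hnpm, Nat.sub_add_cancel h2tp, mul_assoc]
    have hψA : ψ A.sum = 0 := by rw [hsum, map_zero]
    obtain ⟨L, hLc, hLle, hLblocks⟩ := extract ψ Gm (t * p - 2) A hk hψA
    set rest := A - L.sum with hrest
    have hLsumcard : Multiset.card L.sum = (t * p - 2) * m := by
      rw [card_msum]
      have he : L.map Multiset.card = L.map (fun _ => m) :=
        Multiset.map_congr rfl (fun B hB => (hLblocks B hB).1)
      rw [he, Multiset.map_const', Multiset.sum_replicate, smul_eq_mul, hLc]
    have hrestcard : Multiset.card rest = 2 * m := by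
      rw [hrest, Multiset.card_sub hLle, hk, hLsumcard]
      have he : ((t * p - 2) + 2) * m = (t * p - 2) * m + 2 * m := by ring
      omega
    have hψrest : ψ rest.sum = 0 := by
      rw [hrest, sub_sum hLle, map_sub, hψA, zero_sub, neg_eq_zero]
      rw [sum_msum, map_multiset_sum, Multiset.map_map]
      apply Multiset.sum_eq_zero
      intro x hx
      obtain ⟨B, hB, rfl⟩ := Multiset.mem_map.mp hx
      exact (hLblocks B hB).2
    set cval : (ZMod n × ZMod n) → (ZMod p × ZMod p) := Function.invFun Φ with hcval
    have hΦc : ∀ x, ψ x = 0 → Φ (cval x) = x := fun x hx => Function.invFun_eq (hΦker x hx)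
    set singles := L.map (fun B => cval B.sum) with hsingles
    set d := cval rest.sum with hd
    have hΦd : Φ d = rest.sum := hΦc _ hψrest
    have hsum_eq : ∀ L' ≤ L, (L'.sum).sum = Φ ((L'.map (fun B => cval B.sum)).sum) := by
      intro L' hL'
      rw [map_multiset_sum, Multiset.map_map, sum_msum]
      congr 1
      apply Multiset.map_congr rfl
      intro B hB
      exact (hΦc B.sum ((hLblocks B (Multiset.mem_of_le hL' hB)).2)).symm
    have hWsum : singles.sum + ({d} : Multiset (ZMod p × ZMod p)).sum = 0 := by
      apply hΦinj
      rw [map_add, map_zero, Multiset.sum_singleton]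
      have e0 := (hsum_eq L (le_refl L)).symm
      rw [← hsingles] at e0
      rw [e0, hΦd]
      have e1 : rest.sum = A.sum - L.sum.sum := by rw [hrest, sub_sum hLle]
      rw [e1, hsum]
      ring
    have hWcard : Multiset.card singles + 2 * Multiset.card ({d} : Multiset (ZMod p × ZMod p))
        = t * p := by
      rw [hsingles, Multiset.card_map, hLc, Multiset.card_singleton]
      omega
    obtain ⟨s, hs_le, dd, hdd_le, hWc, hWs⟩ := Wlem (p := p) t ht singles {d} (by simp) hWcard
      hWsum
    rw [hsingles] at hs_le
    obtain ⟨L', hL'le, hL'map⟩ := exists_le_map hs_le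
    have hL'card : Multiset.card L' = Multiset.card s := by rw [← hL'map, Multiset.card_map]
    have hL'sum_le : L'.sum ≤ L.sum := by
      have e := congrArg Multiset.sum (tsub_add_cancel_of_le hL'le)
      rw [Multiset.sum_add] at e
      calc L'.sum ≤ (L - L').sum + L'.sum := Multiset.le_add_left _ _
        _ = L.sum := e
    have hL'cards : Multiset.card L'.sum = Multiset.card s * m := by
      rw [card_msum]
      have he : L'.map Multiset.card = L'.map (fun _ => m) :=
        Multiset.map_congr rfl (fun B hB => (hLblocks B (Multiset.mem_of_le hL'le hB)).1)
      rw [he, Multiset.map_const', Multiset.sum_replicate, smul_eq_mul, hL'card]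
    rcases Multiset.le_singleton.mp hdd_le with rfl | rfl
    · refine ⟨L'.sum, le_trans hL'sum_le hLle, ?_, ?_⟩
      · rw [hL'cards]
        have hcs : Multiset.card s = p := by simpa using hWc
        rw [hcs, ← hnpm]
      · rw [hsum_eq L' hL'le, hL'map]
        have hs0 : s.sum = 0 := by simpa using hWs
        rw [hs0, map_zero]
    · refine ⟨L'.sum + rest, ?_, ?_, ?_⟩
      · calc L'.sum + rest ≤ L.sum + rest := add_le_add_left hL'sum_le rest
          _ = A := by rw [hrest]; exact add_tsub_cancel_of_le hLle
      · rw [Multiset.card_add, hrestcard, hL'cards]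
        have hcs : Multiset.card s + 2 = p := by simpa using hWc
        have he2 : Multiset.card s * m + 2 * m = (Multiset.card s + 2) * m := by ring
        rw [he2, hcs, ← hnpm]
      · rw [Multiset.sum_add, hsum_eq L' hL'le, hL'map, ← hΦd, ← map_add]
        have hs0 : s.sum + d = 0 := by simpa using hWs
        rw [hs0, map_zero]

theorem three_n (n : ℕ) (hn : 0 < n) (J : Multiset (ZMod n × ZMod n))
    (hJ : Multiset.card J = 3 * n) (hsum : J.sum = 0) :
    ∃ S ≤ J, Multiset.card S = n ∧ S.sum = 0 :=
  goodn n hn 3 le_rfl J hJ hsum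
end

section
/- For n = 2^k, every sequence of (n-1)·2^d + 1 elements in (ℤ/nℤ)^d contains a zero-sum subsequence of length n. -/
open Multiset

/-- The additive hom `ZMod m →+ ZMod (2*m)` sending `x mod m` to `2*x mod 2*m`. -/
noncomputable def dbl (m : ℕ) : ZMod m →+ ZMod (2 * m) :=
  ZMod.lift m ⟨AddMonoidHom.mk' (fun x : ℤ => ((2 * x : ℤ) : ZMod (2 * m)))
      (by intro a b; push_cast; ring), by
    show ((2 * (m : ℤ) : ℤ) : ZMod (2 * m)) = 0
    push_cast
    exact_mod_cast ZMod.natCast_self (2 * m)⟩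

lemma dbl_natCast (m : ℕ) (x : ℕ) : dbl m (x : ZMod m) = ((2 * x : ℕ) : ZMod (2 * m)) := by
  have h : ((x : ℤ) : ZMod m) = (x : ZMod m) := by push_cast; rfl
  rw [← h, dbl, ZMod.lift_coe]
  show ((2 * (x : ℤ) : ℤ) : ZMod (2 * m)) = ((2 * x : ℕ) : ZMod (2 * m))
  push_cast
  ring

lemma dbl_spec (m : ℕ) [NeZero m] (z : ZMod (2 * m)) (h : 2 ∣ z.val) :
    dbl m ((z.val / 2 : ℕ) : ZMod m) = z := by
  have : NeZero (2 * m) := ⟨Nat.mul_ne_zero two_ne_zero (NeZero.ne m)⟩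
  rw [dbl_natCast, Nat.mul_div_cancel' h, ZMod.natCast_val, ZMod.cast_id]

/-- Pullback of a sub-multiset along `map`. -/
lemma exists_preimage {α β : Type*} {f : α → β} :
    ∀ {t : Multiset β} {s : Multiset α}, t ≤ s.map f → ∃ u ≤ s, u.map f = t := by
  classical
  intro t
  induction t using Multiset.induction with
  | empty =>
    intro s _
    exact ⟨0, Multiset.zero_le _, Multiset.map_zero f⟩
  | cons b t ih =>
    intro s h
    have hb : b ∈ s.map f := mem_of_le h (mem_cons_self b t)
    obtain ⟨a, ha, rfl⟩ := mem_map.mp hb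
    have h2 : t ≤ (s.erase a).map f := by
      have he : (s.erase a).map f = (s.map f).erase (f a) := by
        conv_rhs => rw [← cons_erase ha]
        simp
      rw [he]
      have := erase_le_erase (f a) h
      rwa [erase_cons_head] at this
    obtain ⟨u, hu, rfl⟩ := ih h2
    exact ⟨a ::ₘ u, by
      rw [← cons_erase ha]
      exact cons_le_cons a hu, by simp⟩

lemma sum_le_sum_of_le {α : Type*} {s t : Multiset (Multiset α)} (h : s ≤ t) :
    s.sum ≤ t.sum := by
  obtain ⟨u, rfl⟩ := Multiset.le_iff_exists_add.mp h
  rw [Multiset.sum_add]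
  exact le_add_right _ _

/-- Pigeonhole: a multiset larger than the codomain contains two elements with equal image. -/
lemma pigeon {α β : Type*} [Fintype β] (f : α → β) (J : Multiset α)
    (h : Fintype.card β < Multiset.card J) :
    ∃ a b, f a = f b ∧ ({a, b} : Multiset α) ≤ J := by
  classical
  have hnd : ¬ (J.map f).Nodup := by
    intro hnd
    have h1 := Finset.card_le_univ (J.map f).toFinset
    rw [Multiset.toFinset_card_eq_card_iff_nodup.mpr hnd, card_map] at h1
    omega
  rw [Multiset.nodup_iff_count_le_one] at hnd
  push_neg at hnd
  obtain ⟨v, hv⟩ := hnd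
  rw [Multiset.count_map] at hv
  have hTcard : 2 ≤ Multiset.card (J.filter (fun a => v = f a)) := hv
  obtain ⟨a, ha⟩ := Multiset.card_pos_iff_exists_mem.mp
    (show 0 < Multiset.card (J.filter (fun a => v = f a)) by omega)
  obtain ⟨T', hT'⟩ := Multiset.exists_cons_of_mem ha
  rw [hT', Multiset.card_cons] at hTcard
  obtain ⟨b, hb⟩ := Multiset.card_pos_iff_exists_mem.mp (show 0 < Multiset.card T' by omega)
  have hbT : b ∈ J.filter (fun a => v = f a) := by rw [hT']; exact mem_cons_of_mem hb
  refine ⟨a, b, ?_, ?_⟩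
  · have h1 := (Multiset.mem_filter.mp ha).2
    have h2 := (Multiset.mem_filter.mp hbT).2
    rw [← h1, ← h2]
  · have hle : ({a, b} : Multiset α) ≤ a ::ₘ T' := by
      rw [Multiset.insert_eq_cons]
      exact cons_le_cons a ((Multiset.singleton_le).mpr hb)
    rw [← hT'] at hle
    exact hle.trans (Multiset.filter_le _ J)

/-- Greedy extraction of pairs with equal image. -/
lemma extract_pairs {α β : Type*} [Fintype β] (f : α → β) :
    ∀ (t : ℕ) (J : Multiset α), 2 * t + Fintype.card β ≤ Multiset.card J + 1 →
    ∃ P : Multiset (α × α), Multiset.card P = t ∧ (∀ p ∈ P, f p.1 = f p.2) ∧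
      (P.map fun p => ({p.1, p.2} : Multiset α)).sum ≤ J := by
  classical
  intro t
  induction t with
  | zero => exact fun J _ => ⟨0, rfl, by simp, by simp⟩
  | succ t ih =>
    intro J hJ
    obtain ⟨a, b, hfab, hab⟩ := pigeon f J (by omega)
    have hcard : Multiset.card ({a, b} : Multiset α) = 2 := rfl
    obtain ⟨P, hP1, hP2, hP3⟩ := ih (J - {a, b}) (by
      rw [Multiset.card_sub hab, hcard]
      omega)
    refine ⟨(a, b) ::ₘ P, by simp [hP1], ?_, ?_⟩
    · intro p hp
      rcases Multiset.mem_cons.mp hp with h | h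
      · subst h; exact hfab
      · exact hP2 p h
    · rw [Multiset.map_cons, Multiset.sum_cons]
      exact (le_tsub_iff_left hab).mp hP3

lemma harborth_step (m d : ℕ) (hm : 0 < m)
    (IH : ∀ J : Multiset (Fin d → ZMod m), Multiset.card J = (m - 1) * 2 ^ d + 1 →
      ∃ S ≤ J, Multiset.card S = m ∧ S.sum = 0)
    (J : Multiset (Fin d → ZMod (2 * m)))
    (hJ : Multiset.card J = (2 * m - 1) * 2 ^ d + 1) :
    ∃ S ≤ J, Multiset.card S = 2 * m ∧ S.sum = 0 := by
  classical
  have hm' : NeZero m := ⟨hm.ne'⟩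
  have h2m' : NeZero (2 * m) := ⟨Nat.mul_ne_zero two_ne_zero hm.ne'⟩
  have h2m : (2 : ℕ) ∣ 2 * m := ⟨m, rfl⟩
  set f : (Fin d → ZMod (2 * m)) → (Fin d → ZMod 2) :=
    fun a i => ZMod.castHom h2m (ZMod 2) (a i) with hf
  have hcardβ : Fintype.card (Fin d → ZMod 2) = 2 ^ d := by
    rw [Fintype.card_fun, ZMod.card, Fintype.card_fin]
  -- extract (m-1)*2^d + 1 pairs
  obtain ⟨P, hPcard, hPeq, hPle⟩ := extract_pairs f ((m - 1) * 2 ^ d + 1) J (by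
    obtain ⟨m', rfl⟩ := Nat.exists_eq_succ_of_ne_zero hm.ne'
    rw [hJ, hcardβ]
    have e1 : m' + 1 - 1 = m' := rfl
    have e2 : 2 * (m' + 1) - 1 = 2 * m' + 1 := by omega
    rw [e1, e2]
    exact le_of_eq (by ring))
  -- each pair is even componentwise
  have heven : ∀ p ∈ P, ∀ i, (2 : ℕ) ∣ ((p.1 + p.2 : Fin d → ZMod (2 * m)) i).val := by
    intro p hp i
    have h1 : ZMod.castHom h2m (ZMod 2) (p.1 i) = ZMod.castHom h2m (ZMod 2) (p.2 i) :=
      congrFun (hPeq p hp) i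
    have h2 : ZMod.castHom h2m (ZMod 2) ((p.1 + p.2 : Fin d → ZMod (2 * m)) i) = 0 := by
      have hpt : (p.1 + p.2 : Fin d → ZMod (2 * m)) i = p.1 i + p.2 i := rfl
      rw [hpt, _root_.map_add, h1]
      have hxx : ∀ x : ZMod 2, x + x = 0 := by decide
      exact hxx _
    have h3 : ((((p.1 + p.2 : Fin d → ZMod (2 * m)) i).val : ℕ) : ZMod 2) = 0 := by
      rw [ZMod.natCast_val, ← ZMod.castHom_apply (h := h2m)]
      exact h2
    exact (ZMod.natCast_eq_zero_iff _ _).mp h3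
  -- halve each pair
  set c : (Fin d → ZMod (2 * m)) × (Fin d → ZMod (2 * m)) → (Fin d → ZMod m) :=
    fun p i => ((((p.1 + p.2 : Fin d → ZMod (2 * m)) i).val / 2 : ℕ) : ZMod m) with hc
  set dblF : (Fin d → ZMod m) →+ (Fin d → ZMod (2 * m)) := (dbl m).compLeft (Fin d) with hdblF
  have hkey : ∀ p ∈ P, dblF (c p) = p.1 + p.2 := by
    intro p hp
    funext i
    exact dbl_spec m _ (heven p hp i)
  -- apply IH to the halved pairs
  obtain ⟨S, hSle, hScard, hSsum⟩ := IH (P.map c) (by rw [card_map, hPcard])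
  obtain ⟨P', hP'le, hP'map⟩ := exists_preimage hSle
  refine ⟨P'.bind fun p => ({p.1, p.2} : Multiset _), ?_, ?_, ?_⟩
  · have h1 : P'.bind (fun p => ({p.1, p.2} : Multiset _))
        = (P'.map fun p => ({p.1, p.2} : Multiset _)).sum := rfl
    rw [h1]
    exact le_trans (sum_le_sum_of_le (map_le_map hP'le)) hPle
  · rw [Multiset.card_bind]
    have h3 : (Multiset.card ∘ fun p : (Fin d → ZMod (2 * m)) × (Fin d → ZMod (2 * m)) =>
        ({p.1, p.2} : Multiset _)) = fun _ => 2 := funext fun p => rfl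
    rw [h3, Multiset.map_const', Multiset.sum_replicate, smul_eq_mul]
    have hP'card : Multiset.card P' = m := by
      rw [← hP'map, card_map] at hScard
      exact hScard
    rw [hP'card, mul_comm]
  · rw [Multiset.sum_bind]
    have h1 : (P'.map fun p => ({p.1, p.2} : Multiset _).sum)
        = P'.map fun p => (p.1 + p.2 : Fin d → ZMod (2 * m)) := by
      refine Multiset.map_congr rfl fun p _ => ?_
      simp [Multiset.insert_eq_cons]
    rw [h1]
    have h2 : (P'.map fun p => (p.1 + p.2 : Fin d → ZMod (2 * m))) = (P'.map c).map dblF := by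
      rw [Multiset.map_map]
      refine Multiset.map_congr rfl fun p hp => ?_
      exact (hkey p (mem_of_le hP'le hp)).symm
    rw [h2, hP'map, ← AddMonoidHom.map_multiset_sum, hSsum, _root_.map_zero]

theorem harborth_power_of_two (k d : ℕ) (hd : 0 < d)
    (J : Multiset (Fin d → ZMod (2 ^ k)))
    (hJ : Multiset.card J = (2 ^ k - 1) * 2 ^ d + 1) :
    ∃ S ≤ J, Multiset.card S = 2 ^ k ∧ S.sum = 0 := by
  induction k with
  | zero =>
    revert J
    rw [pow_zero]
    intro J hJ
    have h1 : Multiset.card J = 1 := by simpa using hJ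
    obtain ⟨a, rfl⟩ := Multiset.card_eq_one.mp h1
    refine ⟨{a}, le_refl _, by simp, ?_⟩
    rw [Multiset.sum_singleton]
    exact Subsingleton.elim _ _
  | succ k ih =>
    have e : (2 : ℕ) ^ (k + 1) = 2 * 2 ^ k := by ring
    revert J
    rw [e]
    intro J hJ
    exact harborth_step (2 ^ k) d (pow_pos (by norm_num) k) ih J hJ
end
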